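/- In a factorial poset P on [n], |Pre(i)| > |Pre(i+1)| holds if and only if there exist elements forming an induced (2+1) subposet with \ell <_P i, \ell not <_P (i+1), and i, i+1 incomparable. -/

import Mathlib

/-- In a factorial poset on `[n]`, `|Pre(i)| > |Pre(i+1)|` holds iff there is an
induced (2+1) subposet: some `ℓ <_P i` with `ℓ ≮_P i+1`, the element `i+1` being
incomparable to both `ℓ` and `i`. -/
theorem pre_gt_iff_two_plus_one (n : ℕ) (lt : Fin n → Fin n → Prop)
    (hirr : ∀ i, ¬ lt i i)
    (htrans : ∀ i j k, lt i j → lt j k → lt i k)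
    (hnat : ∀ i j, lt i j → i < j)
    (hfact : ∀ i j k : Fin n, i < j → lt j k → lt i k)
    (i : Fin n) (h : (i : ℕ) + 1 < n) :
    (Nat.card {x : Fin n // lt x ⟨(i : ℕ) + 1, h⟩} <
        Nat.card {x : Fin n // lt x i}) ↔
      ∃ ℓ : Fin n, lt ℓ i ∧ ¬ lt ℓ ⟨(i : ℕ) + 1, h⟩ ∧ ¬ lt ⟨(i : ℕ) + 1, h⟩ ℓ ∧
        ¬ lt i ⟨(i : ℕ) + 1, h⟩ ∧ ¬ lt ⟨(i : ℕ) + 1, h⟩ i := by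
  classical
  set j : Fin n := ⟨(i : ℕ) + 1, h⟩ with hj
  -- membership characterization: Pre(k) is an initial segment
  have key : ∀ k x : Fin n,
      lt x k ↔ (x : ℕ) < (Finset.univ.filter (fun y => lt y k)).card := by
    intro k x
    constructor
    · intro hx
      have hsub : Finset.Iic x ⊆ Finset.univ.filter (fun y => lt y k) := by
        intro y hy
        simp only [Finset.mem_Iic] at hy
        simp only [Finset.mem_filter, Finset.mem_univ, true_and]
        rcases lt_or_eq_of_le hy with h' | h'
        · exact hfact y x k h' hx
        · rw [h']; exact hx
      have := Finset.card_le_card hsub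
      rw [Fin.card_Iic] at this
      omega
    · intro hx
      by_contra hnx
      have hsub : Finset.univ.filter (fun y => lt y k) ⊆ Finset.Iio x := by
        intro y hy
        simp only [Finset.mem_filter, Finset.mem_univ, true_and] at hy
        simp only [Finset.mem_Iio]
        by_contra hyx
        push_neg at hyx
        rcases lt_or_eq_of_le hyx with h' | h'
        · exact hnx (hfact x y k h' hy)
        · exact hnx (h' ▸ hy)
      have := Finset.card_le_card hsub
      rw [Fin.card_Iio] at this
      omega
  have cardi : Nat.card {x : Fin n // lt x i}
      = (Finset.univ.filter (fun y => lt y i)).card := by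
    rw [Nat.card_eq_fintype_card, Fintype.card_subtype]
  have cardj : Nat.card {x : Fin n // lt x j}
      = (Finset.univ.filter (fun y => lt y j)).card := by
    rw [Nat.card_eq_fintype_card, Fintype.card_subtype]
  set a := (Finset.univ.filter (fun y => lt y i)).card with ha
  set b := (Finset.univ.filter (fun y => lt y j)).card with hb
  -- Pre(i) ⊆ Iio i, so a ≤ i
  have hai : a ≤ (i : ℕ) := by
    have hsub : Finset.univ.filter (fun y => lt y i) ⊆ Finset.Iio i := by
      intro y hy
      simp only [Finset.mem_filter, Finset.mem_univ, true_and] at hy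
      simpa [Finset.mem_Iio] using hnat y i hy
    have := Finset.card_le_card hsub
    rwa [Fin.card_Iio] at this
  rw [cardi, cardj]
  constructor
  · intro hba
    refine ⟨⟨b, by omega⟩, ?_, ?_, ?_, ?_, ?_⟩
    · exact (key i ⟨b, by omega⟩).2 hba
    · intro hc
      have := (key j ⟨b, by omega⟩).1 hc
      exact lt_irrefl _ this
    · intro hc
      have h1 := hnat _ _ hc
      simp [hj, Fin.lt_def] at h1
      omega
    · intro hc
      have := (key j i).1 hc
      omega
    · intro hc
      have := hnat _ _ hc
      simp [hj, Fin.lt_def] at this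
  · rintro ⟨ℓ, hℓi, hℓj, -, -, -⟩
    have h1 := (key i ℓ).1 hℓi
    have h2 : ¬ ((ℓ : ℕ) < b) := fun hc => hℓj ((key j ℓ).2 hc)
    omega
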